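/- Positive-sedentarity-vanishing lemma: let Σ be a unimodular fan, ζ a nonzero cone of Σ, and c ∈ C^{p,q}(Σ̄) a tropical cocycle (dc = 0) supported on faces contained in the stratum at infinity of ζ. Then c = 0. -/

import Mathlib

open scoped DirectSum NNReal

abbrev NZ (n : ℕ) := Fin n → ℤ
abbrev NR (n : ℕ) := Fin n → ℝ

/-- The canonical map from the lattice `ℤⁿ` into `ℝⁿ`. -/
def latt {n : ℕ} (v : NZ n) : NR n := fun j => (v j : ℝ)

/-- A unimodular (rational, simplicial) fan, encoded combinatorially:
rays are indexed by `R` with primitive generators `e r` in the lattice `ℤⁿ`,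
and cones correspond to those finite sets of rays belonging to `faces`. -/
structure UFan (n : ℕ) where
  R : Type
  fintypeR : Fintype R
  deceqR : DecidableEq R
  e : R → NZ n
  faces : Finset (Finset R)
  empty_mem : ∅ ∈ faces
  down_closed : ∀ S ∈ faces, ∀ T ⊆ S, T ∈ faces
  /-- the primitive generators of the rays of every cone extend to a
  `ℤ`-basis of the lattice -/
  unimodular : ∀ S ∈ faces, ∃ b : Module.Basis (Fin n) ℤ (NZ n), ∃ f : {r // r ∈ S} → Fin n,
      Function.Injective f ∧ ∀ r : {r // r ∈ S}, b (f r) = e r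
  /-- the geometric cones of the family intersect along common faces -/
  isFan : ∀ S ∈ faces, ∀ T ∈ faces,
      (Submodule.span ℝ≥0 (latt '' (e '' (S : Set R))) ⊓
        Submodule.span ℝ≥0 (latt '' (e '' (T : Set R))))
        = Submodule.span ℝ≥0 (latt '' (e '' ((S ∩ T : Finset R) : Set R)))

attribute [instance] UFan.fintypeR UFan.deceqR

namespace UFan

variable {n : ℕ} (Φ : UFan n)

/-- The sublattice `N_σ` generated by the rays of a cone `σ`. -/
def Nsub (S : Finset Φ.R) : Submodule ℤ (NZ n) :=
  Submodule.span ℤ (Φ.e '' (S : Set Φ.R))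

/-- The quotient lattice `N^τ = N / N_τ`. -/
abbrev Q (T : Finset Φ.R) := NZ n ⧸ Φ.Nsub T

/-- The projection `N → N^τ`. -/
def qmap (T : Finset Φ.R) : NZ n →ₗ[ℤ] Φ.Q T := (Φ.Nsub T).mkQ

lemma Nsub_mono {T T' : Finset Φ.R} (h : T ⊆ T') : Φ.Nsub T ≤ Φ.Nsub T' :=
  Submodule.span_mono (Set.image_mono (Finset.coe_subset.2 h))

/-- The projection `N^τ → N^τ'` for `τ ⊆ τ'`. -/
def proj {T T' : Finset Φ.R} (h : T ⊆ T') : Φ.Q T →ₗ[ℤ] Φ.Q T' :=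
  Submodule.mapQ _ _ LinearMap.id
    (by simpa using Φ.Nsub_mono h)

/-- The map on exterior algebras induced by the projection `N^τ → N^τ'`. -/
def emap {T T' : Finset Φ.R} (h : T ⊆ T') :
    ExteriorAlgebra ℤ (Φ.Q T) →ₗ[ℤ] ExteriorAlgebra ℤ (Φ.Q T') :=
  (ExteriorAlgebra.map (Φ.proj h)).toLinearMap

/-- The multi-tangent space `F_p(□_σ^τ)`: the sum over cones `η ⊇ σ` of the
images of `⋀^p N_η` inside the exterior algebra of `N^τ`. -/
def Fmod (p : ℕ) (T S : Finset Φ.R) : Submodule ℤ (ExteriorAlgebra ℤ (Φ.Q T)) :=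
  ⨆ (S' : Finset Φ.R) (_ : S' ∈ Φ.faces) (_ : S ⊆ S'),
    Submodule.map (ExteriorAlgebra.map ((Φ.qmap T).comp (Φ.Nsub S').subtype)).toLinearMap
      (⋀[ℤ]^p ↥(Φ.Nsub S'))

/-- Faces `□_σ^τ` of dimension `q` of the canonical compactification, encoded as
pairs `(τ, σ)` of cones with `τ ⊆ σ` and `dim σ - dim τ = q`. -/
def FaceIdx (q : ℕ) :=
  {TS : Finset Φ.R × Finset Φ.R //
    TS.1 ⊆ TS.2 ∧ TS.2 ∈ Φ.faces ∧ TS.2.card = TS.1.card + q}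

instance (q : ℕ) : Fintype (Φ.FaceIdx q) := by
  unfold FaceIdx; infer_instance

instance (q : ℕ) : DecidableEq (Φ.FaceIdx q) := by
  unfold FaceIdx; infer_instance

/-- `γ` is a codimension-one face of `δ` in the canonical compactification. -/
def Adj {q : ℕ} (γ : Φ.FaceIdx q) (δ : Φ.FaceIdx (q + 1)) : Prop :=
  δ.1.1 ⊆ γ.1.1 ∧ γ.1.2 ⊆ δ.1.2

instance {q : ℕ} (γ : Φ.FaceIdx q) (δ : Φ.FaceIdx (q + 1)) : Decidable (Φ.Adj γ δ) := by
  unfold Adj; infer_instance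

/-- The cellular chain group `C_{p,q}` of the canonical compactification. -/
abbrev Cch (p q : ℕ) := ⨁ δ : Φ.FaceIdx q, ↥(Φ.Fmod p δ.1.1 δ.1.2)

end UFan

/-- Auxiliary data for the tropical (co)chain complexes of the canonical
compactification: a system of incidence signs coming from a choice of cellular
orientation, together with the component maps `F_p(δ) → F_p(γ)` (projection
followed by inclusion), characterized inside the ambient exterior algebras. -/
structure TropData {n : ℕ} (Φ : UFan n) where
  ε : ∀ q : ℕ, Φ.FaceIdx q → Φ.FaceIdx (q + 1) → ℤ
  ε_unit : ∀ q γ δ, Φ.Adj γ δ → ε q γ δ = 1 ∨ ε q γ δ = -1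
  ε_zero : ∀ q γ δ, ¬ Φ.Adj γ δ → ε q γ δ = 0
  ε_rel : ∀ (q : ℕ) (γ : Φ.FaceIdx q) (δ : Φ.FaceIdx (q + 2)),
      (∑ μ : Φ.FaceIdx (q + 1), ε q γ μ * ε (q + 1) μ δ) = 0
  imap : ∀ (p : ℕ) {q : ℕ} (γ : Φ.FaceIdx q) (δ : Φ.FaceIdx (q + 1)), Φ.Adj γ δ →
      (↥(Φ.Fmod p δ.1.1 δ.1.2) →ₗ[ℤ] ↥(Φ.Fmod p γ.1.1 γ.1.2))
  imap_spec : ∀ (p : ℕ) {q : ℕ} (γ : Φ.FaceIdx q) (δ : Φ.FaceIdx (q + 1)) (h : Φ.Adj γ δ)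
      (x : ↥(Φ.Fmod p δ.1.1 δ.1.2)),
      (imap p γ δ h x : ExteriorAlgebra ℤ (Φ.Q γ.1.1)) =
        Φ.emap h.1 (x : ExteriorAlgebra ℤ (Φ.Q δ.1.1))

namespace UFan

variable {n : ℕ} (Φ : UFan n)

/-- The cellular boundary map `C_{p,q+1} → C_{p,q}`. -/
noncomputable def bdry (td : TropData Φ) (p q : ℕ) :
    Φ.Cch p (q + 1) →ₗ[ℤ] Φ.Cch p q :=
  DirectSum.toModule ℤ _ _ fun δ =>
    ∑ γ : Φ.FaceIdx q,
      if h : Φ.Adj γ δ then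
        td.ε q γ δ •
          ((DirectSum.lof ℤ (Φ.FaceIdx q) (fun γ' => ↥(Φ.Fmod p γ'.1.1 γ'.1.2)) γ).comp
            (td.imap p γ δ h))
      else 0

/-- The cellular cochain group `C^{p,q}` of the canonical compactification. -/
abbrev Cco (p q : ℕ) := Module.Dual ℤ (Φ.Cch p q)

/-- The cellular coboundary map. -/
noncomputable def coder (td : TropData Φ) (p q : ℕ) : Φ.Cco p q →ₗ[ℤ] Φ.Cco p (q + 1) :=
  (Φ.bdry td p q).dualMap

/-- The coboundary arriving in degree `q`. -/
noncomputable def coderFrom (td : TropData Φ) (p : ℕ) :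
    ∀ q : ℕ, Φ.Cco p (q - 1) →ₗ[ℤ] Φ.Cco p q
  | 0 => 0
  | (q + 1) => Φ.coder td p q

/-- Tropical cohomology `H^{p,q}` of the canonical compactification. -/
noncomputable def Hcoh (td : TropData Φ) (p q : ℕ) :=
  ↥(LinearMap.ker (Φ.coder td p q)) ⧸
    Submodule.comap (LinearMap.ker (Φ.coder td p q)).subtype
      (LinearMap.range (Φ.coderFrom td p q))

noncomputable instance (td : TropData Φ) (p q : ℕ) : AddCommGroup (Φ.Hcoh td p q) := by
  unfold Hcoh; infer_instance

/-- The boundary leaving degree `q`. -/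
noncomputable def bdryTo (td : TropData Φ) (p : ℕ) :
    ∀ q : ℕ, Φ.Cch p q →ₗ[ℤ] Φ.Cch p (q - 1)
  | 0 => 0
  | (q + 1) => Φ.bdry td p q

noncomputable instance (td : TropData Φ) (p q : ℕ) : AddCommGroup (LinearMap.ker (Φ.bdryTo td p q)) :=
  @Submodule.addCommGroup ℤ (Φ.Cch p q) _ _ _ (LinearMap.ker (Φ.bdryTo td p q))

/-- Tropical homology `H_{p,q}` of the canonical compactification. -/
noncomputable def Hhom (td : TropData Φ) (p q : ℕ) :=
  ↥(LinearMap.ker (Φ.bdryTo td p q)) ⧸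
    Submodule.comap (LinearMap.ker (Φ.bdryTo td p q)).subtype
      (LinearMap.range (Φ.bdry td p q))

noncomputable instance (td : TropData Φ) (p q : ℕ) : AddCommGroup (Φ.Hhom td p q) := by
  unfold Hhom; infer_instance

end UFan


namespace UFan

variable {n : ℕ} (Φ : UFan n)

lemma proj_comp_qmap {T T' : Finset Φ.R} (h : T ⊆ T') :
    (Φ.proj h).comp (Φ.qmap T) = Φ.qmap T' := by
  unfold proj qmap
  rw [Submodule.mapQ_mkQ, LinearMap.comp_id]

lemma emap_comp (S' : Finset Φ.R) {T T' : Finset Φ.R} (h : T ⊆ T') :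
    (Φ.emap h).comp
      (ExteriorAlgebra.map ((Φ.qmap T).comp (Φ.Nsub S').subtype)).toLinearMap
      = (ExteriorAlgebra.map ((Φ.qmap T').comp (Φ.Nsub S').subtype)).toLinearMap := by
  unfold emap
  rw [← AlgHom.comp_toLinearMap, ExteriorAlgebra.map_comp_map,
    ← LinearMap.comp_assoc, Φ.proj_comp_qmap h]

lemma Fmod_le_map (p : ℕ) {T T' : Finset Φ.R} (h : T ⊆ T') (S : Finset Φ.R) :
    Φ.Fmod p T' S ≤ Submodule.map (Φ.emap h) (Φ.Fmod p T S) := by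
  unfold Fmod
  refine iSup₂_le fun S' hS' => iSup_le fun hSS' => ?_
  rw [← Φ.emap_comp S' h, Submodule.map_comp]
  exact Submodule.map_mono (le_iSup₂_of_le S' hS' (le_iSup_of_le hSS' le_rfl))

lemma imap_surjective (td : TropData Φ) (p : ℕ) {q : ℕ}
    (γ : Φ.FaceIdx q) (δ : Φ.FaceIdx (q + 1)) (h : Φ.Adj γ δ)
    (hσ : γ.1.2 = δ.1.2) :
    Function.Surjective (td.imap p γ δ h) := by
  rintro ⟨x, hx⟩
  have hx2 : x ∈ Φ.Fmod p γ.1.1 δ.1.2 := by rw [← hσ]; exact hx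
  obtain ⟨y, hy, hxy⟩ := Φ.Fmod_le_map p h.1 δ.1.2 hx2
  refine ⟨⟨y, hy⟩, Subtype.ext ?_⟩
  rw [td.imap_spec p γ δ h ⟨y, hy⟩]
  exact hxy

end UFan

/-- positive-sedentarity-vanishing lemma: let `Φ` be a unimodular
fan, `ζ` a nonzero cone of `Φ`, and `c ∈ C^{p,q}(Φ̄)` a tropical cocycle (`dc = 0`)
supported on the faces lying in the stratum at infinity of `ζ`, i.e. whose
sedentarity contains `ζ`.  Then `c = 0`. -/
theorem positive_sedentarity_vanishing {n : ℕ} (Φ : UFan n) (td : TropData Φ)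
    (ζ : Finset Φ.R) (hζ : ζ ∈ Φ.faces) (hζne : ζ ≠ ∅)
    (p q : ℕ) (c : Φ.Cco p q)
    (hcocycle : Φ.coder td p q c = 0)
    (hsupp : ∀ δ : Φ.FaceIdx q, ¬ ζ ⊆ δ.1.1 →
      ∀ x : ↥(Φ.Fmod p δ.1.1 δ.1.2),
        c (DirectSum.lof ℤ (Φ.FaceIdx q) (fun γ => ↥(Φ.Fmod p γ.1.1 γ.1.2)) δ x) = 0) :
    c = 0 := by
  refine DirectSum.linearMap_ext ℤ fun δ => LinearMap.ext fun x => ?_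
  simp only [LinearMap.comp_apply, LinearMap.zero_apply, LinearMap.zero_comp]
  by_cases hζδ : ζ ⊆ δ.1.1
  · obtain ⟨r, hr⟩ := Finset.nonempty_iff_ne_empty.2 hζne
    have hrδ : r ∈ δ.1.1 := hζδ hr
    have hτσ : δ.1.1 ⊆ δ.1.2 := δ.2.1
    have hσf : δ.1.2 ∈ Φ.faces := δ.2.2.1
    have hcard : δ.1.2.card = δ.1.1.card + q := δ.2.2.2
    have hcard' : δ.1.2.card = (δ.1.1.erase r).card + (q + 1) := by
      rw [Finset.card_erase_of_mem hrδ]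
      have h1 : 1 ≤ δ.1.1.card := Finset.card_pos.2 ⟨r, hrδ⟩
      omega
    have hμmem : ((δ.1.1.erase r, δ.1.2) : Finset Φ.R × Finset Φ.R).1 ⊆
        ((δ.1.1.erase r, δ.1.2) : Finset Φ.R × Finset Φ.R).2 :=
      (Finset.erase_subset r δ.1.1).trans hτσ
    let μ : Φ.FaceIdx (q + 1) := ⟨(δ.1.1.erase r, δ.1.2), ⟨hμmem, hσf, hcard'⟩⟩
    have hadj : Φ.Adj δ μ := ⟨Finset.erase_subset r δ.1.1, subset_rfl⟩
    obtain ⟨y, hy⟩ := Φ.imap_surjective td p δ μ hadj rfl x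
    have hcc : (Φ.bdry td p q).dualMap c = 0 := hcocycle
    have h0 : c (Φ.bdry td p q
        (DirectSum.lof ℤ (Φ.FaceIdx (q + 1)) (fun γ => ↥(Φ.Fmod p γ.1.1 γ.1.2)) μ y)) = 0 := by
      have h2 := LinearMap.congr_fun hcc
        (DirectSum.lof ℤ (Φ.FaceIdx (q + 1)) (fun γ => ↥(Φ.Fmod p γ.1.1 γ.1.2)) μ y)
      rwa [LinearMap.dualMap_apply] at h2
    rw [UFan.bdry, DirectSum.toModule_lof, LinearMap.sum_apply, map_sum] at h0
    rw [Finset.sum_eq_single_of_mem δ (Finset.mem_univ δ) ?side] at h0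
    · rw [dif_pos hadj, LinearMap.smul_apply, LinearMap.comp_apply, hy, LinearMap.map_smul] at h0
      rcases td.ε_unit q δ μ hadj with he | he
      · rw [he, one_smul] at h0; exact h0
      · rw [he, neg_smul, one_smul, neg_eq_zero] at h0; exact h0
    case side =>
      intro γ _ hγδ
      by_cases hA : Φ.Adj γ μ
      · rw [dif_pos hA]
        have hns : ¬ ζ ⊆ γ.1.1 := by
          intro hc
          apply hγδ
          have hrγ : r ∈ γ.1.1 := hc hr
          have hδγ : δ.1.1 ⊆ γ.1.1 := by
            intro a ha
            by_cases har : a = r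
            · exact har ▸ hrγ
            · exact hA.1 (Finset.mem_erase.2 ⟨har, ha⟩)
          have hγσ : γ.1.2 ⊆ δ.1.2 := hA.2
          have hcγ : γ.1.2.card = γ.1.1.card + q := γ.2.2.2
          have hc1 : δ.1.1.card ≤ γ.1.1.card := Finset.card_le_card hδγ
          have hle : δ.1.2.card ≤ γ.1.2.card := by rw [hcard, hcγ]; omega
          have hσeq : γ.1.2 = δ.1.2 := Finset.eq_of_subset_of_card_le hγσ hle
          have hc2 : γ.1.2.card = δ.1.2.card := by rw [hσeq]
          have hτeq : δ.1.1 = γ.1.1 :=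
            Finset.eq_of_subset_of_card_le hδγ (by omega)
          exact Subtype.ext (Prod.ext hτeq.symm hσeq)
        rw [LinearMap.smul_apply, LinearMap.comp_apply, LinearMap.map_smul,
          hsupp γ hns (td.imap p γ μ hA y), smul_zero]
      · rw [dif_neg hA, LinearMap.zero_apply, map_zero]
  · exact hsupp δ hζδ x
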